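/- Let T be a threshold graph that is not complete, with vertex connectivity κ and largest clique size d. Then for every i with κ+1 ≤ i ≤ d−1, one has b_{i+1} < Σ_{Y ⊆ V(T), |Y| = i} (W(T−Y) − 1), where the sum ranges over all subsets Y of V(T) of cardinality i. -/

import Mathlib

open Finset

/-- `G` is chordal: every cycle of length at least 4 has a chord, i.e. an edge
joining two non-consecutive vertices of the cycle. -/
def IsChordal {V : Type*} (G : SimpleGraph V) : Prop :=
  ∀ (n : ℕ), 4 ≤ n → ∀ f : ZMod n → V, Function.Injective f →
    (∀ i : ZMod n, G.Adj (f i) (f (i + 1))) →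
    ∃ i j : ZMod n, i ≠ j ∧ i + 1 ≠ j ∧ j + 1 ≠ i ∧ G.Adj (f i) (f j)

/-- The number of cliques of `G` with exactly `i` vertices. -/
noncomputable def cliqueCount {V : Type*} [Fintype V] (G : SimpleGraph V) (i : ℕ) : ℕ :=
  {s : Finset V | G.IsNClique i s}.ncard

/-- `W(G - Y)`: the number of connected components of the subgraph of `G` induced on the
complement of `Y`. -/
noncomputable def numComponents {V : Type*} [Fintype V] [DecidableEq V] (G : SimpleGraph V)
    (Y : Finset V) : ℕ :=
  Nat.card (G.induce (↑(Yᶜ) : Set V)).ConnectedComponent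

/-- A vertex-cut of `G`: a set of vertices whose removal disconnects `G`. -/
def IsVertexCut {V : Type*} [Fintype V] [DecidableEq V] (G : SimpleGraph V) (Y : Finset V) :
    Prop :=
  ¬ (G.induce (↑(Yᶜ) : Set V)).Connected

/-- The vertex connectivity `κ(G)`: the minimum cardinality of a vertex-cut. -/
noncomputable def vertexConnectivity {V : Type*} [Fintype V] [DecidableEq V]
    (G : SimpleGraph V) : ℕ :=
  sInf {k | ∃ Y : Finset V, IsVertexCut G Y ∧ Y.card = k}

/-- `s` is a maximal clique of `G`. -/
def IsMaxCliqueOf {V : Type*} (G : SimpleGraph V) (s : Finset V) : Prop :=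
  G.IsClique (↑s : Set V) ∧ ∀ t : Finset V, G.IsClique (↑t : Set V) → s ⊆ t → s = t

/-- A dominating `i`-clique of `G`: a set of `i`-cliques such that every maximal clique of
order at least `i` contains some member of the set. -/
def IsDominatingCliqueSet {V : Type*} (G : SimpleGraph V) (i : ℕ)
    (D : Finset (Finset V)) : Prop :=
  (∀ s ∈ D, G.IsNClique i s) ∧
    ∀ t : Finset V, IsMaxCliqueOf G t → i ≤ t.card → ∃ s ∈ D, s ⊆ t

/-- `d_i(G)`: the minimum cardinality of a dominating `i`-clique of `G`. -/
noncomputable def domNum {V : Type*} (G : SimpleGraph V) (i : ℕ) : ℕ :=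
  sInf {k | ∃ D : Finset (Finset V), IsDominatingCliqueSet G i D ∧ D.card = k}

/-- `κ̃(G)`: the maximum cardinality of the intersection of a pair of distinct maximal
cliques of `G`. -/
noncomputable def kappaTilde {V : Type*} [DecidableEq V] (G : SimpleGraph V) : ℕ :=
  sSup {k | ∃ C C' : Finset V, IsMaxCliqueOf G C ∧ IsMaxCliqueOf G C' ∧ C ≠ C' ∧
    (C ∩ C').card = k}

/-- `G` restricted to the vertex set `s` is a threshold graph: it can be built from a
one-vertex graph by repeatedly adding either an isolated vertex or a vertex adjacent to
all existing vertices. -/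
inductive IsThresholdOn {V : Type*} [DecidableEq V] (G : SimpleGraph V) : Finset V → Prop
  | single (v : V) : IsThresholdOn G {v}
  | isolated (s : Finset V) (v : V) (hv : v ∉ s) (hs : IsThresholdOn G s)
      (hiso : ∀ u ∈ s, ¬ G.Adj v u) : IsThresholdOn G (insert v s)
  | dominating (s : Finset V) (v : V) (hv : v ∉ s) (hs : IsThresholdOn G s)
      (hdom : ∀ u ∈ s, G.Adj v u) : IsThresholdOn G (insert v s)

/-- `G` is a threshold graph. -/
def IsThreshold {V : Type*} [Fintype V] [DecidableEq V] (G : SimpleGraph V) : Prop :=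
  IsThresholdOn G Finset.univ

/-- `|C_i(G)|`: the number of maximal cliques of `G` with exactly `i` vertices. -/
noncomputable def maxCliqueCount {V : Type*} [Fintype V] (G : SimpleGraph V) (i : ℕ) : ℕ :=
  {s : Finset V | IsMaxCliqueOf G s ∧ s.card = i}.ncard

/-- `s` is a maximal clique of `G` among the cliques contained in `W`, i.e. a facet of the
restriction of the clique complex of `G` to `W`. -/
def IsMaxCliqueWithin {V : Type*} (G : SimpleGraph V) (W : Finset V) (s : Finset V) : Prop :=
  s ⊆ W ∧ G.IsClique (↑s : Set V) ∧
    ∀ t : Finset V, t ⊆ W → G.IsClique (↑t : Set V) → s ⊆ t → s = t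

/-- The restriction of the clique complex of `G` to `W` is pure: all its facets have the
same cardinality. -/
def PureOn {V : Type*} (G : SimpleGraph V) (W : Finset V) : Prop :=
  ∀ s t : Finset V, IsMaxCliqueWithin G W s → IsMaxCliqueWithin G W t → s.card = t.card

namespace Stmt9Aux

variable {V : Type} [DecidableEq V]

def Spec (G : SimpleGraph V) : List (V × Bool) → Prop
  | [] => True
  | (v, b) :: rest => v ∉ rest.map Prod.fst ∧
      (∀ u ∈ rest.map Prod.fst, if b then G.Adj v u else ¬ G.Adj v u) ∧ Spec G rest

theorem exists_spec {G : SimpleGraph V} {s : Finset V} (h : IsThresholdOn G s) :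
    ∃ L : List (V × Bool), Spec G L ∧ (L.map Prod.fst).toFinset = s := by
  induction h with
  | single v => exact ⟨[(v, false)], ⟨by simp, by simp, trivial⟩, by simp⟩
  | isolated s v hv hs hiso ih =>
      obtain ⟨L, hL, hLs⟩ := ih
      refine ⟨(v, false) :: L, ⟨?_, ?_, hL⟩, by simp [hLs]⟩
      · simpa [← List.mem_toFinset, hLs] using hv
      · intro u hu; simpa using hiso u (by rwa [← List.mem_toFinset, hLs] at hu)
  | dominating s v hv hs hdom ih =>
      obtain ⟨L, hL, hLs⟩ := ih
      refine ⟨(v, true) :: L, ⟨?_, ?_, hL⟩, by simp [hLs]⟩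
      · simpa [← List.mem_toFinset, hLs] using hv
      · intro u hu; simpa using hdom u (by rwa [← List.mem_toFinset, hLs] at hu)

theorem spec_nodup {G : SimpleGraph V} : ∀ {L : List (V × Bool)}, Spec G L →
    (L.map Prod.fst).Nodup
  | [], _ => by simp
  | (v, b) :: rest, ⟨h1, _, h3⟩ => by
      rw [List.map_cons, List.nodup_cons]
      exact ⟨h1, spec_nodup h3⟩

/-- the vertex list, head = last added -/
def vlist (L : List (V × Bool)) : List V := L.map Prod.fst

/-- `v` was added as a dominating vertex -/
def isDomL (L : List (V × Bool)) (v : V) : Prop := (v, true) ∈ L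

instance (L : List (V × Bool)) (v : V) : Decidable (isDomL L v) := by
  unfold isDomL; infer_instance

/-- index from head; smaller index = added later -/
def idxL (L : List (V × Bool)) (v : V) : ℕ := (vlist L).idxOf v

theorem adj_iff {G : SimpleGraph V} : ∀ {L : List (V × Bool)}, Spec G L →
    ∀ {u v : V}, v ∈ vlist L → idxL L u < idxL L v → (G.Adj u v ↔ isDomL L u)
  | [], _, u, v, hv, _ => by simp [vlist] at hv
  | (w, b) :: rest, ⟨h1, h2, h3⟩, u, v, hv, hlt => by
      have hvl : vlist ((w, b) :: rest) = w :: vlist rest := rfl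
      by_cases huw : u = w
      · subst huw
        have hvu : v ≠ u := by
          rintro rfl
          simp [idxL, hvl] at hlt
        have hvr : v ∈ vlist rest := by
          rcases (by simpa [hvl] using hv : v = u ∨ v ∈ vlist rest) with rfl | h
          · exact absurd rfl hvu
          · exact h
        have hadj := h2 v hvr
        have hur : (u, true) ∉ rest := fun h =>
          h1 (by simpa [vlist] using List.mem_map_of_mem (f := Prod.fst) h)
        have hdom' : isDomL ((u, b) :: rest) u ↔ b = true := by
          simp [isDomL, List.mem_cons, hur, eq_comm]
        cases b with
        | true => rw [hdom']; exact iff_of_true (by simpa using hadj) rfl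
        | false => rw [hdom']; exact iff_of_false (by simpa using hadj) (by simp)
      · have hvw : v ≠ w := by
          rintro rfl
          simp [idxL, hvl, List.idxOf_cons_self] at hlt
        have hvr : v ∈ vlist rest := by
          rcases (by simpa [hvl] using hv : v = w ∨ v ∈ vlist rest) with rfl | h
          · exact absurd rfl hvw
          · exact h
        have hiu : idxL ((w, b) :: rest) u = idxL rest u + 1 := by
          simp [idxL, hvl, List.idxOf_cons_ne _ (Ne.symm huw)]
        have hiv : idxL ((w, b) :: rest) v = idxL rest v + 1 := by
          simp [idxL, hvl, List.idxOf_cons_ne _ (Ne.symm hvw)]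
        rw [adj_iff h3 hvr (by omega : idxL rest u < idxL rest v)]
        simp [isDomL, List.mem_cons, Prod.ext_iff, huw]

theorem mem_vlist_of_idx_lt {L : List (V × Bool)} {u v : V} (hv : v ∈ vlist L)
    (h : idxL L u < idxL L v) : u ∈ vlist L := by
  have : idxL L u < (vlist L).length :=
    lt_of_lt_of_le h (le_of_lt (List.idxOf_lt_length_iff.2 hv))
  exact List.idxOf_lt_length_iff.1 this

theorem idx_inj {L : List (V × Bool)} {u v : V} (hu : u ∈ vlist L) (hv : v ∈ vlist L)
    (h : idxL L u = idxL L v) : u = v := (List.idxOf_inj hu).1 h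

section WithFintype

variable [Fintype V]

/-- dominating vertices added after `v` -/
def AvL (L : List (V × Bool)) (v : V) : Finset V :=
  univ.filter (fun u => isDomL L u ∧ idxL L u < idxL L v)

def aL (L : List (V × Bool)) (v : V) : ℕ := (AvL L v).card

theorem mem_AvL {L : List (V × Bool)} {u v : V} :
    u ∈ AvL L v ↔ isDomL L u ∧ idxL L u < idxL L v := by simp [AvL]

theorem AvL_mono {L : List (V × Bool)} {v w : V} (h : idxL L v ≤ idxL L w) :
    AvL L v ⊆ AvL L w := fun u hu => by
  rw [mem_AvL] at hu ⊢; exact ⟨hu.1, lt_of_lt_of_le hu.2 h⟩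

theorem not_mem_AvL_self {L : List (V × Bool)} {v : V} : v ∉ AvL L v := by
  simp [mem_AvL]

variable {G : SimpleGraph V} {L : List (V × Bool)}

theorem isClique_insert (hL : Spec G L) (hcomp : ∀ v : V, v ∈ vlist L)
    {w : V} {B : Finset V} (hB : B ⊆ AvL L w) :
    G.IsClique (↑(insert w B) : Set V) := by
  have key : ∀ x ∈ insert w B, ∀ y ∈ insert w B, idxL L x < idxL L y → G.Adj x y := by
    intro x hx y hy h
    have hxd : isDomL L x := by
      rcases Finset.mem_insert.1 hx with rfl | hxB
      · rcases Finset.mem_insert.1 hy with rfl | hyB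
        · exact absurd h (lt_irrefl _)
        · exact absurd h (by have := (mem_AvL.1 (hB hyB)).2; omega)
      · exact (mem_AvL.1 (hB hxB)).1
    exact (adj_iff hL (hcomp y) h).2 hxd
  intro x hx y hy hxy
  rw [Finset.mem_coe] at hx hy
  rcases lt_trichotomy (idxL L x) (idxL L y) with h|h|h
  · exact key x hx y hy h
  · exact absurd (idx_inj (hcomp x) (hcomp y) h) hxy
  · exact (key y hy x hx h).symm

theorem isNClique_iff (hL : Spec G L) (hcomp : ∀ v : V, v ∈ vlist L)
    {m : ℕ} (hm : 1 ≤ m) (s : Finset V) :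
    G.IsNClique m s ↔ ∃ w, ∃ B ∈ (AvL L w).powersetCard (m-1), s = insert w B := by
  constructor
  · rintro ⟨hcl, hcard⟩
    have hne : s.Nonempty := by rw [← Finset.card_pos, hcard]; omega
    obtain ⟨w, hws, hmax⟩ := Finset.exists_max_image s (idxL L) hne
    refine ⟨w, s.erase w, ?_, (Finset.insert_erase hws).symm⟩
    rw [Finset.mem_powersetCard]
    constructor
    · intro u hu
      have hus : u ∈ s := Finset.mem_of_mem_erase hu
      have hne' : u ≠ w := Finset.ne_of_mem_erase hu
      have hlt : idxL L u < idxL L w :=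
        lt_of_le_of_ne (hmax u hus) (fun h => hne' (idx_inj (hcomp u) (hcomp w) h))
      have hadj : G.Adj u w := hcl (by simpa using hus) (by simpa using hws) hne'
      exact mem_AvL.2 ⟨(adj_iff hL (hcomp w) hlt).1 hadj, hlt⟩
    · rw [Finset.card_erase_of_mem hws, hcard]
  · rintro ⟨w, B, hB, rfl⟩
    rw [Finset.mem_powersetCard] at hB
    have hwB : w ∉ B := fun h => not_mem_AvL_self (hB.1 h)
    exact ⟨isClique_insert hL hcomp hB.1,
      by rw [Finset.card_insert_of_notMem hwB, hB.2]; omega⟩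

theorem max_of_mem_image {w : V} {k : ℕ} {s : Finset V}
    (hs : s ∈ ((AvL L w).powersetCard k).image (insert w)) :
    w ∈ s ∧ ∀ x ∈ s, idxL L x ≤ idxL L w := by
  obtain ⟨B, hB, rfl⟩ := Finset.mem_image.1 hs
  rw [Finset.mem_powersetCard] at hB
  refine ⟨Finset.mem_insert_self _ _, fun x hx => ?_⟩
  rcases Finset.mem_insert.1 hx with rfl | h
  · exact le_refl _
  · exact le_of_lt (mem_AvL.1 (hB.1 h)).2

theorem cliqueCount_eq (hL : Spec G L) (hcomp : ∀ v : V, v ∈ vlist L)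
    {m : ℕ} (hm : 1 ≤ m) :
    cliqueCount G m = ∑ w : V, (aL L w).choose (m - 1) := by
  classical
  have hset : {s : Finset V | G.IsNClique m s} =
      ↑(univ.biUnion (fun w : V => ((AvL L w).powersetCard (m-1)).image (insert w))) := by
    ext s
    rw [Set.mem_setOf_eq, isNClique_iff hL hcomp hm]
    simp [eq_comm]
  rw [cliqueCount, hset, Set.ncard_coe_finset]
  rw [Finset.card_biUnion]
  · refine Finset.sum_congr rfl fun w _ => ?_
    have hinj : Set.InjOn (insert w) ((Finset.powersetCard (m-1) (AvL L w) : Finset (Finset V)) : Set (Finset V)) := by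
      intro B1 h1 B2 h2 he
      rw [Finset.mem_coe, Finset.mem_powersetCard] at h1 h2
      have hw1 : w ∉ B1 := fun h => not_mem_AvL_self (h1.1 h)
      have hw2 : w ∉ B2 := fun h => not_mem_AvL_self (h2.1 h)
      rw [← Finset.erase_insert hw1, ← Finset.erase_insert hw2, he]
    rw [Finset.card_image_of_injOn hinj, Finset.card_powersetCard]
    rfl
  · intro w1 _ w2 _ hne
    rw [Function.onFun, Finset.disjoint_left]
    intro s hs1 hs2
    obtain ⟨hw1s, hmax1⟩ := max_of_mem_image hs1
    obtain ⟨hw2s, hmax2⟩ := max_of_mem_image hs2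
    exact hne (idx_inj (hcomp w1) (hcomp w2)
      (le_antisymm (hmax2 w1 hw1s) (hmax1 w2 hw2s)))

theorem aL_clique (hL : Spec G L) (hcomp : ∀ v : V, v ∈ vlist L) (w : V) :
    G.IsNClique (aL L w + 1) (insert w (AvL L w)) := by
  rw [isNClique_iff hL hcomp (by omega)]
  exact ⟨w, AvL L w, by rw [Finset.mem_powersetCard]; exact ⟨subset_rfl, rfl⟩, rfl⟩

theorem sum_eval (hL : Spec G L) (hcomp : ∀ v : V, v ∈ vlist L) {d : ℕ}
    (hd : ∀ w : V, aL L w + 1 ≤ d) (x : ℤ) :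
    ∑ m ∈ Icc 1 d, (cliqueCount G m : ℤ) * x ^ (m-1) = ∑ w : V, (x+1) ^ (aL L w) := by
  have h1 : ∀ m ∈ Icc 1 d, (cliqueCount G m : ℤ) * x^(m-1)
      = ∑ w : V, ((aL L w).choose (m-1) : ℤ) * x^(m-1) := by
    intro m hm
    rw [cliqueCount_eq hL hcomp (mem_Icc.1 hm).1]
    push_cast
    rw [Finset.sum_mul]
  rw [Finset.sum_congr rfl h1, Finset.sum_comm]
  refine Finset.sum_congr rfl fun w _ => ?_
  have hreind : ∑ m ∈ Icc 1 d, ((aL L w).choose (m-1) : ℤ) * x^(m-1)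
      = ∑ k ∈ range d, ((aL L w).choose k : ℤ) * x^k := by
    refine Finset.sum_nbij' (fun m => m - 1) (fun k => k + 1) ?_ ?_ ?_ ?_ ?_ <;>
      intros <;> simp_all [Finset.mem_Icc, Finset.mem_range] <;> omega
  rw [hreind]
  rw [← Finset.sum_subset (Finset.range_subset_range.2 (hd w))
    (fun k _ hk => by
      rw [Nat.choose_eq_zero_of_lt (by simpa using hk)]
      simp)]
  rw [add_pow]
  refine Finset.sum_congr rfl fun k _ => ?_
  ring

theorem coeff_extract {d : ℕ} {b : ℕ → ℤ} {f : V → ℕ}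
    (h : ∀ y : ℤ, ∑ m ∈ Icc 1 d, b m * y^(m-1) = ∑ w : V, y^(f w))
    {i : ℕ} (hi : i + 1 ≤ d) :
    b (i+1) = ((univ.filter (fun w => f w = i)).card : ℤ) := by
  classical
  set p : Polynomial ℤ := (∑ m ∈ Icc 1 d, Polynomial.C (b m) * Polynomial.X^(m-1)) -
    ∑ w : V, Polynomial.X^(f w) with hp
  have hpz : p = 0 := by
    apply Polynomial.funext
    intro y
    simp only [hp, Polynomial.eval_sub, Polynomial.eval_finset_sum, Polynomial.eval_mul,
      Polynomial.eval_C, Polynomial.eval_pow, Polynomial.eval_X, Polynomial.eval_zero]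
    rw [h y, sub_self]
  have hc : p.coeff i = 0 := by rw [hpz]; simp
  rw [hp] at hc
  rw [Polynomial.coeff_sub, Polynomial.finset_sum_coeff, Polynomial.finset_sum_coeff] at hc
  have e1 : ∑ m ∈ Icc 1 d, (Polynomial.C (b m) * Polynomial.X ^ (m-1)).coeff i = b (i+1) := by
    rw [Finset.sum_eq_single (i+1)]
    · rw [Polynomial.coeff_C_mul, Polynomial.coeff_X_pow, if_pos (by omega), mul_one]
    · intro m hm hne
      rw [Polynomial.coeff_C_mul, Polynomial.coeff_X_pow, if_neg, mul_zero]
      have := (mem_Icc.1 hm).1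
      omega
    · intro hni
      exact absurd (mem_Icc.2 ⟨by omega, hi⟩) hni
  have e2 : ∑ w : V, (Polynomial.X ^ (f w) : Polynomial ℤ).coeff i
      = ((univ.filter (fun w => f w = i)).card : ℤ) := by
    rw [← Finset.sum_boole]
    refine Finset.sum_congr rfl fun w _ => ?_
    rw [Polynomial.coeff_X_pow]
    by_cases hfw : f w = i
    · simp [hfw]
    · simp [hfw, Ne.symm hfw]
  rw [e1, e2] at hc
  omega

theorem vlist_length (hnd : (vlist L).Nodup) (hcomp : ∀ v : V, v ∈ vlist L) :
    (vlist L).length = Fintype.card V := by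
  have h1 : (vlist L).toFinset = (univ : Finset V) := by
    ext v; simp [hcomp v]
  rw [← List.toFinset_card_of_nodup hnd, h1, Finset.card_univ]

theorem card_filter_idx_lt (hnd : (vlist L).Nodup) (hcomp : ∀ v : V, v ∈ vlist L)
    {k : ℕ} (hk : k ≤ Fintype.card V) :
    (univ.filter (fun u => idxL L u < k)).card = k := by
  have key : (univ.filter (fun u => idxL L u < k)).card = (Finset.range k).card := by
    refine Finset.card_bij' (fun u _ => idxL L u)
      (fun j hj => (vlist L).get ⟨j, by
        rw [vlist_length hnd hcomp]; exact lt_of_lt_of_le (Finset.mem_range.1 hj) hk⟩)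
      ?_ ?_ ?_ ?_
    · intro u hu; exact Finset.mem_range.2 (by simpa using hu)
    · intro j hj
      simp only [Finset.mem_filter, Finset.mem_univ, true_and]
      simp only [idxL]
      rw [List.get_idxOf hnd]
      exact Finset.mem_range.1 hj
    · intro u hu
      exact List.idxOf_get _
    · intro j hj
      simp only [idxL]
      rw [List.get_idxOf hnd]
  rw [key, Finset.card_range]

theorem card_filter_idx_gt (hnd : (vlist L).Nodup) (hcomp : ∀ v : V, v ∈ vlist L)
    {k : ℕ} (hk : k < Fintype.card V) :
    (univ.filter (fun u => k < idxL L u)).card = Fintype.card V - (k + 1) := by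
  have h1 := card_filter_idx_lt (L := L) hnd hcomp (k := k + 1) (by omega)
  have h2 := Finset.card_filter_add_card_filter_not
    (s := (univ : Finset V)) (p := fun u => idxL L u < k + 1)
  have h3 : (univ.filter (fun u => ¬ idxL L u < k + 1)) = univ.filter (fun u => k < idxL L u) := by
    apply Finset.filter_congr; intro u _; constructor <;> (intro; omega)
  rw [h3] at h2
  rw [Finset.card_univ] at h2
  omega

theorem numComponents_ge {G : SimpleGraph V} {Y S' : Finset V} {u0 : V}
    (hS : ∀ v ∈ S', v ∉ Y ∧ ∀ u, G.Adj v u → u ∈ Y)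
    (hu0 : u0 ∉ Y) (hu0S : u0 ∉ S') :
    S'.card + 1 ≤ numComponents G Y := by
  classical
  have hmem : ∀ v : V, v ∉ Y → v ∈ (↑(Yᶜ) : Set V) := fun v hv => by simp [hv]
  set G' := G.induce (↑(Yᶜ) : Set V) with hG'
  haveI : Finite (↑(Yᶜ) : Set V) := Subtype.finite
  haveI : Finite G'.ConnectedComponent := Quot.finite _
  haveI := Fintype.ofFinite G'.ConnectedComponent
  have hiso : ∀ (v : (↑(Yᶜ) : Set V)), (∀ u, G.Adj v.1 u → u ∈ Y) →
      ∀ x, G'.Reachable v x → x = v := by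
    intro v hv x hr
    obtain ⟨p⟩ := hr
    cases p with
    | nil => rfl
    | @cons _ w _ h q =>
        exfalso
        have hadj : G.Adj v.1 w.1 := by simpa [hG', SimpleGraph.comap_adj] using h
        have : w.1 ∈ Y := hv _ hadj
        exact absurd this (by simpa using w.2)
  let F : Finset G'.ConnectedComponent := S'.attach.image
    (fun v => G'.connectedComponentMk ⟨v.1, hmem v.1 (hS v.1 v.2).1⟩)
  have hcard : F.card = S'.card := by
    rw [Finset.card_image_of_injOn, Finset.card_attach]
    intro v _ w _ he
    have hr := (SimpleGraph.ConnectedComponent.eq).1 he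
    have hvw := hiso _ (hS w.1 w.2).2 _ hr.symm
    exact Subtype.ext (Subtype.mk_eq_mk.1 hvw)
  have hu0F : G'.connectedComponentMk ⟨u0, hmem u0 hu0⟩ ∉ F := by
    intro hmemF
    obtain ⟨v, hv, he⟩ := Finset.mem_image.1 hmemF
    have hr := (SimpleGraph.ConnectedComponent.eq).1 he
    have heq := hiso _ (hS v.1 v.2).2 _ hr
    have : u0 = v.1 := Subtype.mk_eq_mk.1 heq
    rw [this] at hu0S
    exact hu0S v.2
  have hle : (insert (G'.connectedComponentMk ⟨u0, hmem u0 hu0⟩) F).card ≤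
      Fintype.card G'.ConnectedComponent := by
    rw [← Finset.card_univ]; exact Finset.card_le_univ _
  rw [Finset.card_insert_of_notMem hu0F, hcard] at hle
  rw [numComponents, Nat.card_eq_fintype_card]
  exact hle

theorem numComponents_pos {G : SimpleGraph V} {Y : Finset V} {v : V} (hv : v ∉ Y) :
    1 ≤ numComponents G Y := by
  classical
  haveI : Finite (↑(Yᶜ) : Set V) := Subtype.finite
  haveI : Finite (G.induce (↑(Yᶜ) : Set V)).ConnectedComponent := Quot.finite _
  haveI : Nonempty (G.induce (↑(Yᶜ) : Set V)).ConnectedComponent :=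
    ⟨(G.induce (↑(Yᶜ) : Set V)).connectedComponentMk ⟨v, by simp [hv]⟩⟩
  exact Nat.card_pos

theorem reach_eq {W : Type*} {H : SimpleGraph W} (hno : ∀ a b, ¬ H.Adj a b) {x y : W}
    (h : H.Reachable x y) : x = y := by
  obtain ⟨p⟩ := h
  cases p with
  | nil => rfl
  | cons hadj q => exact absurd hadj (hno _ _)

theorem exists_nonadj {G : SimpleGraph V} (hnc : G ≠ ⊤) :
    ∃ u v : V, u ≠ v ∧ ¬ G.Adj u v := by
  by_contra h
  push_neg at h
  apply hnc
  ext u v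
  simp only [SimpleGraph.top_adj]
  exact ⟨fun ha => ha.ne, fun hne => h u v hne⟩

theorem d_lt {G : SimpleGraph V} (hnc : G ≠ ⊤) {d : ℕ} (hd : ∃ s : Finset V, G.IsNClique d s) :
    d < Fintype.card V := by
  obtain ⟨s, hcl, hcard⟩ := hd
  rcases lt_or_eq_of_le (hcard ▸ Finset.card_le_univ s : d ≤ Fintype.card V) with h | h
  · exact h
  · exfalso
    apply hnc
    have hsu : s = univ := Finset.eq_univ_of_card s (by rw [hcard, h])
    ext u v
    simp only [SimpleGraph.top_adj]
    refine ⟨fun ha => ha.ne, fun hne => ?_⟩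
    exact hcl (by simp [hsu]) (by simp [hsu]) hne

end WithFintype

end Stmt9Aux

section
open Stmt9Aux

/-- For a non-complete threshold graph `T` with vertex connectivity `κ`, largest clique
size `d` and `b`-vector `b`, for every `κ + 1 ≤ i ≤ d - 1` one has
`b (i+1) < Σ_{|Y| = i} (W(T-Y) - 1)`. -/
theorem stmt9 {V : Type} [Fintype V] [DecidableEq V] (T : SimpleGraph V)
    (hnc : T ≠ ⊤) (hth : IsThreshold T)
    (d : ℕ) (hd : ∃ s : Finset V, T.IsNClique d s)
    (hdmax : ∀ (m : ℕ) (s : Finset V), T.IsNClique m s → m ≤ d)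
    (b : ℕ → ℤ)
    (hb : ∀ x : ℤ, ∑ i ∈ Finset.Icc 1 d, b i * (x + 1) ^ (i - 1) =
      ∑ i ∈ Finset.Icc 1 d, (cliqueCount T i : ℤ) * x ^ (i - 1))
    (i : ℕ) (hi1 : vertexConnectivity T + 1 ≤ i) (hi2 : i ≤ d - 1) :
    b (i + 1) < ∑ Y ∈ Finset.powersetCard i (Finset.univ : Finset V),
      ((numComponents T Y : ℤ) - 1) := by
  classical
  obtain ⟨L, hL, hLuniv⟩ := exists_spec hth
  have hnd : (vlist L).Nodup := spec_nodup hL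
  have hcomp : ∀ v : V, v ∈ vlist L := fun v => by
    rw [← List.mem_toFinset]
    show v ∈ (L.map Prod.fst).toFinset
    rw [hLuniv]; exact Finset.mem_univ v
  set n := Fintype.card V with hn
  -- basic numerology
  have hd2 : 2 ≤ d := by omega
  have hdn : d < n := d_lt hnc hd
  have hin : i ≤ n - 2 := by omega
  have ha_le : ∀ w : V, aL L w + 1 ≤ d := fun w =>
    hdmax _ _ (aL_clique hL hcomp w)
  -- b (i+1) equals the number of vertices with a-value i
  have heval : ∀ y : ℤ, ∑ m ∈ Finset.Icc 1 d, b m * y ^ (m - 1) = ∑ w : V, y ^ (aL L w) := by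
    intro y
    have h1 := hb (y - 1)
    rw [sum_eval hL hcomp ha_le (y - 1)] at h1
    simpa using h1
  have hbeq : b (i + 1) = ((univ.filter (fun w => aL L w = i)).card : ℤ) :=
    coeff_extract heval (by omega)
  set βF : Finset V := univ.filter (fun w => aL L w = i) with hβF
  -- existence of a non-dominating vertex
  have hndom : ∃ w : V, ¬ isDomL L w := by
    obtain ⟨u₀, v₀, hne0, hnadj⟩ := exists_nonadj hnc
    rcases lt_trichotomy (idxL L u₀) (idxL L v₀) with h | h | h
    · exact ⟨u₀, fun hdom => hnadj ((adj_iff hL (hcomp v₀) h).2 hdom)⟩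
    · exact absurd (idx_inj (hcomp u₀) (hcomp v₀) h) hne0
    · exact ⟨v₀, fun hdom => hnadj (((adj_iff hL (hcomp u₀) h).2 hdom).symm)⟩
  obtain ⟨z, hzND, hzmin⟩ := Finset.exists_min_image
    (univ.filter (fun w => ¬ isDomL L w)) (idxL L)
    (by obtain ⟨w, hw⟩ := hndom; exact ⟨w, by simp [hw]⟩)
  have hznd : ¬ isDomL L z := (Finset.mem_filter.1 hzND).2
  have hdomlt : ∀ u : V, idxL L u < idxL L z → isDomL L u := by
    intro u hu
    by_contra hnd'
    have := hzmin u (by simp [hnd'])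
    omega
  have hidxz : idxL L z < n := by
    rw [hn, ← vlist_length hnd hcomp]
    exact List.idxOf_lt_length_iff.2 (hcomp z)
  have hAvz : AvL L z = univ.filter (fun u => idxL L u < idxL L z) := by
    ext u
    rw [mem_AvL, Finset.mem_filter]
    exact ⟨fun h => ⟨Finset.mem_univ u, h.2⟩, fun h => ⟨hdomlt u h.2, h.2⟩⟩
  have ht : aL L z = idxL L z := by
    rw [aL, hAvz, card_filter_idx_lt hnd hcomp (le_of_lt hidxz)]
  have hNz : ∀ u : V, T.Adj z u → u ∈ AvL L z := by
    intro u hadj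
    rcases lt_trichotomy (idxL L u) (idxL L z) with h | h | h
    · exact mem_AvL.2 ⟨hdomlt u h, h⟩
    · exact absurd (idx_inj (hcomp u) (hcomp z) h) (fun he => T.irrefl (he ▸ hadj))
    · exact absurd ((adj_iff hL (hcomp u) h).1 hadj) hznd
  -- connectivity : idxL L z ≤ vertexConnectivity T ≤ i - 1
  have hcutne : {k | ∃ Y : Finset V, IsVertexCut T Y ∧ Y.card = k}.Nonempty := by
    obtain ⟨u₀, v₀, hne0, hnadj⟩ := exists_nonadj hnc
    refine ⟨(({u₀, v₀} : Finset V)ᶜ).card, ({u₀, v₀} : Finset V)ᶜ, ?_, rfl⟩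
    intro hconn
    have hu₀ : u₀ ∈ (↑((({u₀, v₀} : Finset V)ᶜ)ᶜ) : Set V) := by simp
    have hv₀ : v₀ ∈ (↑((({u₀, v₀} : Finset V)ᶜ)ᶜ) : Set V) := by simp
    have hreach := hconn.preconnected ⟨u₀, hu₀⟩ ⟨v₀, hv₀⟩
    have : u₀ = v₀ := by
      have := reach_eq (H := T.induce _) ?_ hreach
      · exact congrArg Subtype.val this
      · rintro ⟨a, ha⟩ ⟨c, hc⟩ hadj
        have hac : T.Adj a c := by simpa [SimpleGraph.comap_adj] using hadj
        simp only [Finset.coe_compl, compl_compl, Finset.coe_insert, Set.mem_insert_iff,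
          Finset.coe_singleton, Set.mem_singleton_iff] at ha hc
        rcases ha with rfl | rfl <;> rcases hc with rfl | rfl
        · exact T.irrefl hac
        · exact hnadj hac
        · exact hnadj hac.symm
        · exact T.irrefl hac
    exact hne0 this
  obtain ⟨Y0, hY0cut, hY0card⟩ := Nat.sInf_mem hcutne
  have htκ : idxL L z ≤ Y0.card := by
    by_contra hlt
    push_neg at hlt
    have hsub : ¬ (univ.filter (fun u => idxL L u < idxL L z) ⊆ Y0) := by
      intro hsub
      have := Finset.card_le_card hsub
      rw [card_filter_idx_lt hnd hcomp (le_of_lt hidxz)] at this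
      omega
    obtain ⟨u, hu, huY⟩ := Finset.not_subset.1 hsub
    have huz : idxL L u < idxL L z := (Finset.mem_filter.1 hu).2
    have huniv : ∀ w : V, w ≠ u → T.Adj u w := by
      intro w hw
      rcases lt_trichotomy (idxL L w) (idxL L u) with h | h | h
      · exact ((adj_iff hL (hcomp u) h).2 (hdomlt w (by omega))).symm
      · exact absurd (idx_inj (hcomp w) (hcomp u) h) hw
      · exact (adj_iff hL (hcomp w) h).2 (hdomlt u huz)
    apply hY0cut
    have humem : u ∈ (↑(Y0ᶜ) : Set V) := by simp [huY]
    rw [SimpleGraph.connected_iff]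
    refine ⟨?_, ⟨⟨u, humem⟩⟩⟩
    have key : ∀ x : (↑(Y0ᶜ) : Set V), (T.induce (↑(Y0ᶜ) : Set V)).Reachable x ⟨u, humem⟩ := by
      intro x
      by_cases hx : x.1 = u
      · rw [show x = (⟨u, humem⟩ : (↑(Y0ᶜ) : Set V)) from Subtype.ext hx]
      · refine SimpleGraph.Adj.reachable ?_
        show T.Adj x.1 u
        exact (huniv x.1 hx).symm
    intro a c
    exact (key a).trans (key c).symm
  have hti : idxL L z + 1 ≤ i := by
    have : vertexConnectivity T = Y0.card := hY0card.symm
    omega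
  set t := idxL L z with htdef
  -- the predecessor set of z
  set Pz : Finset V := univ.filter (fun u => t < idxL L u) with hPz
  have hPzcard : Pz.card = n - (t + 1) := card_filter_idx_gt hnd hcomp hidxz
  -- helper facts about Av z
  have hAvPz : Disjoint (AvL L z) Pz := by
    rw [Finset.disjoint_left]
    intro x hx hx'
    have h1 := (mem_AvL.1 hx).2
    have h2 := (Finset.mem_filter.1 hx').2
    omega
  have hAvzcard : (AvL L z).card = t := ht ▸ rfl
  -- membership of z in S-sets built from Av z ∪ B
  have hzmemS : ∀ B : Finset V, B ⊆ Pz → B.card = i - t →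
      (AvL L z ∪ B).card = i ∧ z ∉ AvL L z ∪ B ∧
      (∀ u, T.Adj z u → u ∈ AvL L z ∪ B) ∧
      ∃ u, u ∉ AvL L z ∪ B ∧ t < idxL L u := by
    intro B hBsub hBcard
    have hdisj : Disjoint (AvL L z) B := hAvPz.mono_right hBsub
    have hcard : (AvL L z ∪ B).card = i := by
      rw [Finset.card_union_of_disjoint hdisj, hAvzcard, hBcard]
      omega
    have hzB : z ∉ B := fun h => by
      have := (Finset.mem_filter.1 (hBsub h)).2
      omega
    have hzY : z ∉ AvL L z ∪ B := by
      rw [Finset.mem_union]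
      rintro (h | h)
      · exact not_mem_AvL_self h
      · exact hzB h
    have hBne : B ≠ Pz := by
      intro h
      rw [h] at hBcard
      omega
    have hBssub : ∃ u ∈ Pz, u ∉ B := by
      by_contra hc
      push_neg at hc
      exact hBne (Finset.Subset.antisymm hBsub hc)
    obtain ⟨u, huPz, huB⟩ := hBssub
    refine ⟨hcard, hzY, fun v hv => Finset.mem_union_left _ (hNz v hv), u, ?_, (Finset.mem_filter.1 huPz).2⟩
    rw [Finset.mem_union]
    rintro (h | h)
    · have := (mem_AvL.1 h).2
      have := (Finset.mem_filter.1 huPz).2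
      omega
    · exact huB h
  -- the S-set of a removal set Y
  set SY : Finset V → Finset V := fun Y => univ.filter
    (fun v => v ∉ Y ∧ (∀ u, T.Adj v u → u ∈ Y) ∧ ∃ u, u ∉ Y ∧ idxL L v < idxL L u) with hSYdef
  have hWS : ∀ Y : Finset V, Y.card = i → (SY Y).card + 1 ≤ numComponents T Y := by
    intro Y hYcard
    have hYcne : (Yᶜ : Finset V).Nonempty := by
      rw [← Finset.card_pos, Finset.card_compl, hYcard]
      omega
    obtain ⟨u0, hu0mem, hu0max⟩ := Finset.exists_max_image (Yᶜ : Finset V) (idxL L) hYcne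
    refine numComponents_ge (u0 := u0) ?_ (Finset.mem_compl.1 hu0mem) ?_
    · intro v hv
      have h := (Finset.mem_filter.1 hv).2
      exact ⟨h.1, h.2.1⟩
    · intro hc
      obtain ⟨u, huY, hltu⟩ := (Finset.mem_filter.1 hc).2.2.2
      have := hu0max u (Finset.mem_compl.2 huY)
      omega
  have hterm : ∀ Y ∈ Finset.powersetCard i (univ : Finset V),
      (0 : ℤ) ≤ (numComponents T Y : ℤ) - 1 := by
    intro Y hY
    have hYcard : Y.card = i := (Finset.mem_powersetCard_univ.1 hY)
    have hYne : ∃ v, v ∉ Y := by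
      by_contra hc
      push_neg at hc
      have : Y = univ := Finset.eq_univ_iff_forall.2 hc
      rw [this, Finset.card_univ] at hYcard
      omega
    obtain ⟨v, hv⟩ := hYne
    have := numComponents_pos (G := T) hv
    omega
  -- construct the second witness family A(z) ∪ B
  have hBex : i - t ≤ Pz.card := by omega
  obtain ⟨B1, hB1sub, hB1card⟩ := Finset.exists_subset_card_eq hBex
  obtain ⟨hY1card, hzY1, hNY1, hEY1⟩ := hzmemS B1 hB1sub hB1card
  have hzSY1 : z ∈ SY (AvL L z ∪ B1) := by
    rw [hSYdef]
    exact Finset.mem_filter.2 ⟨Finset.mem_univ z, hzY1, hNY1, hEY1⟩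
  rcases Finset.eq_empty_or_nonempty βF with hβe | hβne
  · -- no vertex has a-value i : b (i+1) = 0
    rw [hbeq, hβe]
    simp only [Finset.card_empty, Nat.cast_zero]
    have hY1mem : AvL L z ∪ B1 ∈ Finset.powersetCard i (univ : Finset V) :=
      Finset.mem_powersetCard_univ.2 hY1card
    have h1 : ((SY (AvL L z ∪ B1)).card : ℤ) + 1 ≤ numComponents T (AvL L z ∪ B1) := by
      exact_mod_cast hWS _ hY1card
    have h2 : 1 ≤ (SY (AvL L z ∪ B1)).card := Finset.card_pos.2 ⟨z, hzSY1⟩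
    calc (0 : ℤ) < (numComponents T (AvL L z ∪ B1) : ℤ) - 1 := by
          have : (1 : ℤ) ≤ ((SY (AvL L z ∪ B1)).card : ℤ) := by exact_mod_cast h2
          omega
      _ = ∑ Y ∈ ({AvL L z ∪ B1} : Finset (Finset V)), ((numComponents T Y : ℤ) - 1) := by
          rw [Finset.sum_singleton]
      _ ≤ ∑ Y ∈ Finset.powersetCard i (univ : Finset V), ((numComponents T Y : ℤ) - 1) := by
          refine Finset.sum_le_sum_of_subset_of_nonneg ?_ (fun Y hY _ => hterm Y hY)
          exact Finset.singleton_subset_iff.2 hY1mem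
  · -- main case
    obtain ⟨wstar, hwstarβ, hwmin⟩ := Finset.exists_min_image βF (idxL L) hβne
    obtain ⟨mstar, hmstarβ, hmmax⟩ := Finset.exists_max_image βF (idxL L) hβne
    have hawstar : aL L wstar = i := (Finset.mem_filter.1 hwstarβ).2
    have hamstar : aL L mstar = i := (Finset.mem_filter.1 hmstarβ).2
    set Ystar : Finset V := AvL L wstar with hYstardef
    have hYstarcard : Ystar.card = i := hawstar
    have hzlt : t < idxL L wstar := by
      by_contra hc
      push_neg at hc
      have hsub := AvL_mono (L := L) (v := wstar) (w := z) hc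
      have := Finset.card_le_card hsub
      rw [← aL, ← aL, ht] at this
      rw [hawstar] at this
      omega
    have hmstarY : mstar ∉ Ystar := by
      intro hc
      have := (mem_AvL.1 hc).2
      have := hwmin mstar hmstarβ
      omega
    have hwm : idxL L wstar ≤ idxL L mstar := hwmin mstar hmstarβ
    -- every member of βF other than mstar is non-dominating with Av = Av wstar
    have hf2 : ∀ v ∈ βF, v ≠ mstar → ¬ isDomL L v ∧ AvL L v = AvL L wstar := by
      intro v hv hvne
      have hav : aL L v = i := (Finset.mem_filter.1 hv).2
      have hltm : idxL L v < idxL L mstar :=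
        lt_of_le_of_ne (hmmax v hv) (fun h => hvne (idx_inj (hcomp v) (hcomp mstar) h))
      constructor
      · intro hdom
        have hsub : insert v (AvL L v) ⊆ AvL L mstar := by
          refine Finset.insert_subset (mem_AvL.2 ⟨hdom, hltm⟩) (AvL_mono (le_of_lt hltm))
        have := Finset.card_le_card hsub
        rw [Finset.card_insert_of_notMem not_mem_AvL_self] at this
        rw [← aL] at this
        have h2 : (AvL L mstar).card = i := hamstar
        omega
      · have hsub : AvL L wstar ⊆ AvL L v := AvL_mono (hwmin v hv)
        have : AvL L wstar = AvL L v := Finset.eq_of_subset_of_card_le hsub (by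
          have h1 : (AvL L v).card = i := hav
          have h2 : (AvL L wstar).card = i := hawstar
          omega)
        exact this.symm
    -- the S-set of Ystar contains z and βF.erase mstar
    have hzβ : z ∉ βF := by
      intro hc
      have := (Finset.mem_filter.1 hc).2
      rw [ht] at this
      omega
    have hsub2 : insert z (βF.erase mstar) ⊆ SY Ystar := by
      intro v hv
      rw [hSYdef, Finset.mem_filter]
      rcases Finset.mem_insert.1 hv with rfl | hv'
      · refine ⟨Finset.mem_univ v, ?_, ?_, mstar, fun hc => hmstarY hc, by omega⟩
        · intro hc
          exact hznd (mem_AvL.1 hc).1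
        · intro u hadj
          exact AvL_mono (le_of_lt hzlt) (hNz u hadj)
      · have hvβ : v ∈ βF := Finset.mem_of_mem_erase hv'
        have hvne : v ≠ mstar := Finset.ne_of_mem_erase hv'
        obtain ⟨hvnd, hvAv⟩ := hf2 v hvβ hvne
        have hwv : idxL L wstar ≤ idxL L v := hwmin v hvβ
        have hvm : idxL L v < idxL L mstar :=
          lt_of_le_of_ne (hmmax v hvβ) (fun h => hvne (idx_inj (hcomp v) (hcomp mstar) h))
        refine ⟨Finset.mem_univ v, ?_, ?_, mstar, fun hc => hmstarY hc, hvm⟩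
        · intro hc
          have := (mem_AvL.1 hc).2
          omega
        · intro u hadj
          rcases lt_trichotomy (idxL L u) (idxL L v) with h | h | h
          · have hdu : isDomL L u := (adj_iff hL (hcomp v) h).1 hadj.symm
            rw [hYstardef, ← hvAv]
            exact mem_AvL.2 ⟨hdu, h⟩
          · exact absurd (idx_inj (hcomp u) (hcomp v) h) (fun he => T.irrefl (he ▸ hadj).symm)
          · exact absurd ((adj_iff hL (hcomp u) h).1 hadj) hvnd
    have hcard2 : (insert z (βF.erase mstar)).card = βF.card := by
      rw [Finset.card_insert_of_notMem (fun hc => hzβ (Finset.mem_of_mem_erase hc)),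
        Finset.card_erase_of_mem hmstarβ]
      have : 1 ≤ βF.card := Finset.card_pos.2 ⟨mstar, hmstarβ⟩
      omega
    have hSYstar : βF.card ≤ (SY Ystar).card := by
      rw [← hcard2]
      exact Finset.card_le_card hsub2
    -- construct a second set Y'' ≠ Ystar with z in its S-set
    have hB1ne : B1.Nonempty := by
      rw [← Finset.card_pos, hB1card]
      omega
    obtain ⟨y0, hy0⟩ := hB1ne
    have hB1Pz : ∃ x ∈ Pz, x ∉ B1 := by
      by_contra hc
      push_neg at hc
      have : Pz = B1 := Finset.Subset.antisymm hc hB1sub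
      rw [← this] at hB1card
      omega
    obtain ⟨x0, hx0Pz, hx0B1⟩ := hB1Pz
    set B2 : Finset V := insert x0 (B1.erase y0) with hB2def
    have hB2sub : B2 ⊆ Pz := by
      rw [hB2def]
      exact Finset.insert_subset hx0Pz ((Finset.erase_subset _ _).trans hB1sub)
    have hB2card : B2.card = i - t := by
      rw [hB2def, Finset.card_insert_of_notMem (fun hc => hx0B1 (Finset.mem_of_mem_erase hc)),
        Finset.card_erase_of_mem hy0, hB1card]
      omega
    obtain ⟨hY2card, hzY2, hNY2, hEY2⟩ := hzmemS B2 hB2sub hB2card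
    have hzSY2 : z ∈ SY (AvL L z ∪ B2) := by
      rw [hSYdef]
      exact Finset.mem_filter.2 ⟨Finset.mem_univ z, hzY2, hNY2, hEY2⟩
    have hx0Av : x0 ∉ AvL L z := fun hc => by
      have h1 := (mem_AvL.1 hc).2
      have h2 := (Finset.mem_filter.1 hx0Pz).2
      omega
    have hY12 : AvL L z ∪ B1 ≠ AvL L z ∪ B2 := by
      intro hc
      have hx0Y2 : x0 ∈ AvL L z ∪ B2 := Finset.mem_union_right _ (Finset.mem_insert_self _ _)
      rw [← hc, Finset.mem_union] at hx0Y2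
      rcases hx0Y2 with h | h
      · exact hx0Av h
      · exact hx0B1 h
    -- pick Y'' distinct from Ystar
    obtain ⟨Y2, hY2c, hzSY2', hY2ne⟩ :
        ∃ Y2 : Finset V, Y2.card = i ∧ z ∈ SY Y2 ∧ Y2 ≠ Ystar := by
      rcases eq_or_ne (AvL L z ∪ B1) Ystar with he | hne
      · exact ⟨AvL L z ∪ B2, hY2card, hzSY2, fun hc => hY12 (he ▸ hc ▸ rfl)⟩
      · exact ⟨AvL L z ∪ B1, hY1card, hzSY1, hne⟩
    -- assemble the sum bound
    have hYstarmem : Ystar ∈ Finset.powersetCard i (univ : Finset V) :=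
      Finset.mem_powersetCard_univ.2 hYstarcard
    have hY2mem : Y2 ∈ Finset.powersetCard i (univ : Finset V) :=
      Finset.mem_powersetCard_univ.2 hY2c
    have hbound1 : (βF.card : ℤ) ≤ (numComponents T Ystar : ℤ) - 1 := by
      have h1 := hWS Ystar hYstarcard
      have h3 : βF.card + 1 ≤ (SY Ystar).card + 1 := by omega
      have h5 : βF.card + 1 ≤ numComponents T Ystar := le_trans h3 h1
      have h4 : (βF.card : ℤ) + 1 ≤ (numComponents T Ystar : ℤ) := by exact_mod_cast h5
      omega
    have hbound2 : (1 : ℤ) ≤ (numComponents T Y2 : ℤ) - 1 := by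
      have h1 := hWS Y2 hY2c
      have h2 : 1 ≤ (SY Y2).card := Finset.card_pos.2 ⟨z, hzSY2'⟩
      have h3 : 2 ≤ (SY Y2).card + 1 := by omega
      have h5 : 2 ≤ numComponents T Y2 := le_trans h3 h1
      have h4 : (2 : ℤ) ≤ (numComponents T Y2 : ℤ) := by exact_mod_cast h5
      omega
    rw [hbeq]
    calc (βF.card : ℤ) < (βF.card : ℤ) + 1 := by omega
      _ ≤ ((numComponents T Ystar : ℤ) - 1) + ((numComponents T Y2 : ℤ) - 1) := by omega
      _ = ∑ Y ∈ ({Ystar, Y2} : Finset (Finset V)), ((numComponents T Y : ℤ) - 1) := by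
          rw [Finset.sum_pair (Ne.symm hY2ne)]
      _ ≤ ∑ Y ∈ Finset.powersetCard i (univ : Finset V), ((numComponents T Y : ℤ) - 1) := by
          refine Finset.sum_le_sum_of_subset_of_nonneg ?_ (fun Y hY _ => hterm Y hY)
          intro Y hY
          rcases Finset.mem_insert.1 hY with rfl | hY'
          · exact hYstarmem
          · rw [Finset.mem_singleton.1 hY']
            exact hY2mem

end
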